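/- Let M ≥ 2 be an integer, U : {1,...,M} → ℝ nonincreasing, and C ∈ ℝ. For integers 1 ≤ s ≤ M define f(s) = ( Σ_{i=1}^{s} U(i) − C ) / s, the expected average reward of the pure-3G threshold-s policy with total per-cycle cost C. Suppose the set S = { s ∈ {1,...,M−1} : Σ_{i=1}^{s} U(i) − s·U(s+1) ≥ C } is nonempty and let s₀ = min S. Then f(s₀) ≥ f(s) for every s ∈ {1,...,M}, i.e. the optimal threshold is s₀ = min{ s : Σ_{i=1}^{s} U(i) − s·U(s+1) ≥ C }. -/

import Mathlib

open Finset

private lemma step_dec (s : ℕ) (hs : 1 ≤ s) (S u C : ℝ) (h : (s:ℝ) * u ≤ S - C) :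
    (S + u - C) / ((s:ℝ) + 1) ≤ (S - C) / (s:ℝ) := by
  have hs' : (0:ℝ) < s := by exact_mod_cast hs
  rw [div_le_div_iff₀ (by linarith) hs']
  nlinarith

private lemma step_inc (s : ℕ) (hs : 1 ≤ s) (S u C : ℝ) (h : S - C < (s:ℝ) * u) :
    (S - C) / (s:ℝ) ≤ (S + u - C) / ((s:ℝ) + 1) := by
  have hs' : (0:ℝ) < s := by exact_mod_cast hs
  rw [div_le_div_iff₀ hs' (by linarith)]
  nlinarith

/-- Optimal threshold for the pure-3G policy: with per-cycle cost `C` and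
expected average reward `f(s) = (Σ_{i=1}^{s} U(i) − C)/s`, if
`s₀ = min { s ∈ {1,...,M−1} : Σ_{i=1}^{s} U(i) − s·U(s+1) ≥ C }` exists, then
`f(s₀) ≥ f(s)` for every `s ∈ {1,...,M}`. -/
theorem pure_3G_optimal_threshold (M : ℕ) (U : ℕ → ℝ) (C : ℝ) (s₀ : ℕ)
    (hM : 2 ≤ M)
    (hU : ∀ ⦃x y : ℕ⦄, 1 ≤ x → x ≤ y → y ≤ M → U y ≤ U x)
    (hleast : IsLeast {s : ℕ | 1 ≤ s ∧ s ≤ M - 1 ∧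
      C ≤ (∑ i ∈ Finset.Icc 1 s, U i) - (s : ℝ) * U (s + 1)} s₀) :
    ∀ s : ℕ, 1 ≤ s → s ≤ M →
      ((∑ i ∈ Finset.Icc 1 s, U i) - C) / (s : ℝ)
        ≤ ((∑ i ∈ Finset.Icc 1 s₀, U i) - C) / (s₀ : ℝ) := by
  set S : ℕ → ℝ := fun n => ∑ i ∈ Finset.Icc 1 n, U i with hS
  set f : ℕ → ℝ := fun n => (S n - C) / (n:ℝ) with hf
  obtain ⟨⟨hs₀1, hs₀M, hcond⟩, hmin⟩ := hleast
  have hSsucc : ∀ n : ℕ, S (n + 1) = S n + U (n + 1) := by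
    intro n
    simp [hS, Finset.sum_Icc_succ_top (Nat.one_le_iff_ne_zero.mpr (Nat.succ_ne_zero n))]
  -- condition propagates upward
  have cond : ∀ n : ℕ, s₀ ≤ n → n + 1 ≤ M → C ≤ S n - (n:ℝ) * U (n + 1) := by
    intro n hn
    induction n, hn using Nat.le_induction with
    | base => intro _; exact hcond
    | succ n hn ih =>
      intro hM'
      have h1 : n + 1 ≤ M := by omega
      have ih' := ih h1
      have hU' : U (n + 2) ≤ U (n + 1) := hU (by omega) (by omega) hM'
      have hmul : ((n:ℝ) + 1) * U (n + 2) ≤ ((n:ℝ) + 1) * U (n + 1) := by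
        apply mul_le_mul_of_nonneg_left hU'
        positivity
      have := hSsucc n
      push_cast
      push_cast at ih'
      linarith
  -- f is nonincreasing from s₀ upward
  have upper : ∀ n : ℕ, s₀ ≤ n → n ≤ M → f n ≤ f s₀ := by
    intro n hn
    induction n, hn using Nat.le_induction with
    | base => intro _; exact le_refl _
    | succ n hn ih =>
      intro hM'
      have h1 : n ≤ M := by omega
      have hc := cond n hn (by omega)
      have hstep : f (n + 1) ≤ f n := by
        have := step_dec n (by omega) (S n) (U (n + 1)) C (by linarith)
        simpa [hf, hSsucc n] using this
      calc f (n + 1) ≤ f n := hstep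
        _ ≤ f s₀ := ih h1
  -- f is increasing below s₀
  have lower : ∀ n : ℕ, 1 ≤ n → n < s₀ → f n ≤ f (n + 1) := by
    intro n h1 h2
    have hnot : n ∉ {s : ℕ | 1 ≤ s ∧ s ≤ M - 1 ∧
        C ≤ (∑ i ∈ Finset.Icc 1 s, U i) - (s : ℝ) * U (s + 1)} := by
      intro hmem
      exact absurd (hmin hmem) (by omega)
    have hfail : S n - (n:ℝ) * U (n + 1) < C := by
      by_contra hge
      exact hnot ⟨h1, by omega, by linarith⟩
    have := step_inc n h1 (S n) (U (n + 1)) C (by linarith)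
    simpa [hf, hSsucc n] using this
  intro s hs1 hsM
  rcases le_or_gt s₀ s with h | h
  · exact upper s h hsM
  · -- s < s₀
    have : ∀ n : ℕ, s ≤ n → n ≤ s₀ → f s ≤ f n := by
      intro n hn
      induction n, hn using Nat.le_induction with
      | base => intro _; exact le_refl _
      | succ n hn ih =>
        intro h'
        calc f s ≤ f n := ih (by omega)
          _ ≤ f (n + 1) := lower n (by omega) (by omega)
    exact this s₀ (by omega) (le_refl _)
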